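/- For all integers k ≥ 1 and 0 ≤ i ≤ k, the limit as j → ∞ along integers j with j ≡ i (mod 2) of D_k(i,j) / (2·cos(π/(k+2)))^j exists and equals (4/(k+2)) · sin²(π/(k+2)) · U_{k-i}(cos(π/(k+2))); in particular D_k(i,j) grows like (2·cos(π/(k+2)))^j as j → ∞ with i + j even. -/

import Mathlib

open Real Polynomial Polynomial.Chebyshev Filter Finset

/-- Number of directed paths from `(0,0)` to `(j,i)` in the Bratteli diagram for `SU(2)_k`. -/
def bratteliD (k : ℕ) : ℕ → ℕ → ℕ
  | i, 0 => if i = 0 then 1 else 0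
  | i, j + 1 =>
      if i ≤ k then
        (if 1 ≤ i then bratteliD k (i - 1) j else 0) +
        (if i + 1 ≤ k then bratteliD k (i + 1) j else 0)
      else 0

private lemma sin_prod (a b : ℝ) :
    Real.sin a * Real.sin b = (Real.cos (b - a) - Real.cos (b + a)) / 2 := by
  rw [Real.cos_sub, Real.cos_add]; ring

private lemma sin_rec_aux (t u : ℝ) :
    Real.sin (u - t) + Real.sin (u + t) = 2 * Real.cos t * Real.sin u := by
  rw [Real.sin_sub, Real.sin_add]; ring

private lemma neg_one_pow_congr' (a b : ℕ) (h : a % 2 = b % 2) : (-1 : ℝ) ^ a = (-1) ^ b := by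
  rw [← Nat.div_add_mod a 2, ← Nat.div_add_mod b 2, h, pow_add, pow_add, pow_mul, pow_mul]
  norm_num

private lemma cos_sum (N r : ℕ) (h1 : 1 ≤ r) (h2 : r ≤ N) :
    ∑ m ∈ Finset.range N, Real.cos (m * (r * π / N)) = (1 - (-1 : ℝ) ^ r) / 2 := by
  have hN1 : 1 ≤ N := h1.trans h2
  have hN0 : (0:ℝ) < N := by exact_mod_cast hN1
  have hr0 : (0:ℝ) < r := by exact_mod_cast h1
  have hrN : (r:ℝ) ≤ N := by exact_mod_cast h2
  set φ : ℝ := r * π / N with hφ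
  have hφpos : 0 < φ := div_pos (mul_pos hr0 Real.pi_pos) hN0
  have hφle : φ ≤ π := by
    rw [hφ, div_le_iff₀ hN0]
    nlinarith [Real.pi_pos]
  have hs : 0 < Real.sin (φ/2) :=
    Real.sin_pos_of_pos_of_lt_pi (by linarith) (by linarith [Real.pi_pos])
  have key : ∀ m : ℕ, Real.sin (((m:ℝ)+1)*φ - φ/2) - Real.sin ((m:ℝ)*φ - φ/2)
      = 2 * Real.sin (φ/2) * Real.cos (m*φ) := by
    intro m
    have h : ((m:ℝ)+1)*φ - φ/2 = (m:ℝ)*φ + φ/2 := by ring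
    rw [h, Real.sin_add, Real.sin_sub]; ring
  have tele := Finset.sum_range_sub (f := fun m : ℕ => Real.sin ((m:ℝ)*φ - φ/2)) N
  push_cast at tele
  simp only [key] at tele
  rw [← Finset.mul_sum] at tele
  have hNφ : (N:ℝ) * φ = r * π := by
    rw [hφ]; field_simp
  have hfN : Real.sin ((N:ℝ)*φ - φ/2) = -((-1:ℝ)^r * Real.sin (φ/2)) := by
    rw [hNφ]
    exact_mod_cast Real.sin_nat_mul_pi_sub (φ/2) r
  have hf0 : Real.sin ((0:ℝ)*φ - φ/2) = -Real.sin (φ/2) := by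
    rw [show (0:ℝ)*φ - φ/2 = -(φ/2) by ring, Real.sin_neg]
  rw [hfN, hf0] at tele
  refine mul_left_cancel₀ (a := 2 * Real.sin (φ/2)) (by positivity) ?_
  rw [tele]; ring

private lemma sin_orth (k i : ℕ) (hik : i ≤ k) :
    ∑ m ∈ Finset.range (k+2),
      Real.sin (m * (π / ((k:ℝ)+2))) * Real.sin (((i:ℝ)+1) * (m * (π / ((k:ℝ)+2)))) =
    if i = 0 then ((k:ℝ)+2)/2 else 0 := by
  have h1 : ∀ m : ℕ, Real.sin ((m:ℝ) * (π / ((k:ℝ)+2))) * Real.sin (((i:ℝ)+1) * ((m:ℝ) * (π / ((k:ℝ)+2))))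
      = (Real.cos ((m:ℝ) * ((i:ℝ) * π / ((k:ℝ)+2))) - Real.cos ((m:ℝ) * (((i:ℝ)+2) * π / ((k:ℝ)+2)))) / 2 := by
    intro m
    rw [sin_prod]
    congr 2
    · ring
    · ring
  rw [Finset.sum_congr rfl fun m _ => h1 m]
  rw [← Finset.sum_div, Finset.sum_sub_distrib]
  have hcast : ((k+2 : ℕ) : ℝ) = (k:ℝ)+2 := by push_cast; ring
  by_cases hi : i = 0
  · subst hi
    have h2 := cos_sum (k+2) 2 (by norm_num) (by omega)
    rw [hcast] at h2
    norm_num at h2 ⊢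
    rw [h2]
  · have h3 := cos_sum (k+2) i (Nat.one_le_iff_ne_zero.mpr hi) (by omega)
    have h4 := cos_sum (k+2) (i+2) (by omega) (by omega)
    rw [hcast] at h3 h4
    push_cast at h4
    rw [h3, h4, if_neg hi]
    rw [show ((-1:ℝ))^(i+2) = (-1)^i by rw [pow_add]; norm_num]
    ring

private lemma bratteliD_formula (k : ℕ) : ∀ (j i : ℕ), i ≤ k →
    (bratteliD k i j : ℝ) = 2/((k:ℝ)+2) * ∑ m ∈ Finset.range (k+2),
      (2 * Real.cos (m * (π / ((k:ℝ)+2))))^j *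
      (Real.sin (m * (π / ((k:ℝ)+2))) * Real.sin (((i:ℝ)+1) * (m * (π / ((k:ℝ)+2))))) := by
  have hk2 : ((k:ℝ)+2) ≠ 0 := by positivity
  intro j
  induction j with
  | zero =>
    intro i hik
    simp only [bratteliD, pow_zero, one_mul]
    rw [sin_orth k i hik]
    by_cases hi : i = 0
    · rw [if_pos hi, if_pos hi]
      field_simp
      norm_num
    · rw [if_neg hi, if_neg hi]
      norm_num
  | succ j IH =>
    intro i hik
    rw [bratteliD, if_pos hik]
    push_cast
    have hA : (if 1 ≤ i then ((bratteliD k (i-1) j : ℕ) : ℝ) else 0)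
        = 2/((k:ℝ)+2) * ∑ m ∈ Finset.range (k+2),
            (2 * Real.cos (m * (π / ((k:ℝ)+2))))^j *
            (Real.sin (m * (π / ((k:ℝ)+2))) * Real.sin ((i:ℝ) * (m * (π / ((k:ℝ)+2))))) := by
      rcases Nat.eq_zero_or_pos i with hi | hi
      · subst hi
        simp
      · have hi' : 1 ≤ i := hi
        rw [if_pos hi', IH (i-1) (le_trans (Nat.sub_le i 1) hik)]
        have hcst : ((i-1 : ℕ) : ℝ) + 1 = (i:ℝ) := by
          have h := Nat.succ_pred_eq_of_pos hi
          exact_mod_cast congrArg (Nat.cast : ℕ → ℝ) h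
        rw [hcst]
    have hB : (if i+1 ≤ k then ((bratteliD k (i+1) j : ℕ) : ℝ) else 0)
        = 2/((k:ℝ)+2) * ∑ m ∈ Finset.range (k+2),
            (2 * Real.cos (m * (π / ((k:ℝ)+2))))^j *
            (Real.sin (m * (π / ((k:ℝ)+2))) * Real.sin (((i:ℝ)+2) * (m * (π / ((k:ℝ)+2))))) := by
      by_cases hi : i + 1 ≤ k
      · rw [if_pos hi, IH (i+1) hi]
        have hcst : ((i+1 : ℕ) : ℝ) + 1 = (i:ℝ) + 2 := by push_cast; ring
        rw [hcst]
      · have hike : (i:ℝ) = (k:ℝ) := by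
          have : i = k := by omega
          exact_mod_cast this
        rw [if_neg hi]
        symm
        have hz : ∀ m ∈ Finset.range (k+2),
            (2 * Real.cos ((m:ℝ) * (π / ((k:ℝ)+2))))^j *
            (Real.sin ((m:ℝ) * (π / ((k:ℝ)+2))) * Real.sin (((i:ℝ)+2) * ((m:ℝ) * (π / ((k:ℝ)+2))))) = 0 := by
          intro m _
          have harg : ((i:ℝ)+2) * ((m:ℝ) * (π/((k:ℝ)+2))) = m * π := by
            rw [hike]; field_simp
          rw [harg, Real.sin_nat_mul_pi, mul_zero, mul_zero]
        rw [Finset.sum_eq_zero hz, mul_zero]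
    rw [hA, hB, ← mul_add, ← Finset.sum_add_distrib]
    congr 1
    apply Finset.sum_congr rfl
    intro m _
    rw [show (i:ℝ) * ((m:ℝ) * (π/((k:ℝ)+2)))
        = ((i:ℝ)+1) * ((m:ℝ) * (π/((k:ℝ)+2))) - (m:ℝ) * (π/((k:ℝ)+2)) by ring,
      show ((i:ℝ)+2) * ((m:ℝ) * (π/((k:ℝ)+2)))
        = ((i:ℝ)+1) * ((m:ℝ) * (π/((k:ℝ)+2))) + (m:ℝ) * (π/((k:ℝ)+2)) by ring,
      pow_succ]
    have h := sin_rec_aux ((m:ℝ) * (π/((k:ℝ)+2))) (((i:ℝ)+1) * ((m:ℝ) * (π/((k:ℝ)+2))))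
    linear_combination ((2 * Real.cos ((m:ℝ) * (π/((k:ℝ)+2))))^j
      * Real.sin ((m:ℝ) * (π/((k:ℝ)+2)))) * h

theorem bratteliD_asymptotics (k i : ℕ) (hk : 1 ≤ k) (hik : i ≤ k) :
    Filter.Tendsto
      (fun j : ℕ => (bratteliD k i j : ℝ) / (2 * Real.cos (π / (k + 2))) ^ j)
      (Filter.atTop ⊓ Filter.principal {j : ℕ | j % 2 = i % 2})
      (nhds ((4 / (k + 2)) * (Real.sin (π / (k + 2))) ^ 2 *
        (Chebyshev.U ℝ ((k : ℤ) - i)).eval (Real.cos (π / (k + 2))))) := by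
  have hk2 : (0:ℝ) < (k:ℝ)+2 := by positivity
  have hθpos : 0 < π / ((k:ℝ)+2) := div_pos Real.pi_pos hk2
  have hπθ : ((k:ℝ)+2) * (π/((k:ℝ)+2)) = π := by field_simp
  have hθhalf : π/((k:ℝ)+2) < π/2 := by
    apply div_lt_div_of_pos_left Real.pi_pos two_pos
    have : (1:ℝ) ≤ k := by exact_mod_cast hk
    linarith
  have hcosθ : 0 < Real.cos (π/((k:ℝ)+2)) :=
    Real.cos_pos_of_mem_Ioo ⟨by linarith, hθhalf⟩
  set θ := π/((k:ℝ)+2) with hθdef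
  set c : ℕ → ℝ := fun m => Real.sin (m*θ) * Real.sin (((i:ℝ)+1)*((m:ℝ)*θ)) with hc
  set L : ℕ → ℝ := fun m =>
    (if m = 1 then 2/((k:ℝ)+2) * c 1 else 0) +
    (if m = k+1 then 2/((k:ℝ)+2) * c 1 else 0) with hL
  have hmain : Tendsto (fun j : ℕ => ∑ m ∈ Finset.range (k+2),
      2/((k:ℝ)+2) * (Real.cos ((m:ℝ)*θ)/Real.cos θ)^j * c m)
      (atTop ⊓ 𝓟 {j : ℕ | j % 2 = i % 2})
      (nhds (∑ m ∈ Finset.range (k+2), L m)) := by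
    apply tendsto_finset_sum
    intro m hm
    rw [Finset.mem_range] at hm
    rcases eq_or_ne m 0 with rfl | hm0
    · have hc0 : c 0 = 0 := by simp [hc]
      have hL0 : L 0 = 0 := by
        have h1 : (0:ℕ) ≠ k+1 := by omega
        simp [hL, h1]
      rw [hL0]
      simp only [hc0, mul_zero]
      exact tendsto_const_nhds
    rcases eq_or_ne m 1 with rfl | hm1
    · have hq : Real.cos (((1:ℕ):ℝ)*θ)/Real.cos θ = 1 := by
        rw [Nat.cast_one, one_mul, div_self hcosθ.ne']
      have hL1 : L 1 = 2/((k:ℝ)+2) * c 1 := by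
        have h1 : 1 ≠ k+1 := by omega
        simp [hL, h1, show k ≠ 0 by omega]
      rw [hL1]
      simp only [hq, one_pow, mul_one]
      exact tendsto_const_nhds
    rcases eq_or_ne m (k+1) with rfl | hmk
    · have hLk : L (k+1) = 2/((k:ℝ)+2) * c 1 := by
        have h1 : k+1 ≠ 1 := by omega
        simp [hL, h1, show k ≠ 0 by omega]
      rw [hLk]
      have hq : Real.cos (((k+1:ℕ):ℝ)*θ)/Real.cos θ = -1 := by
        have h1 : ((k+1:ℕ):ℝ)*θ = π - θ := by push_cast; rw [← hπθ]; ring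
        rw [h1, Real.cos_pi_sub, neg_div, div_self hcosθ.ne']
      have hcv : ((-1:ℝ))^i * c (k+1) = c 1 := by
        simp only [hc]
        have h1 : ((k+1:ℕ):ℝ)*θ = π - θ := by push_cast; rw [← hπθ]; ring
        have h2 : ((i:ℝ)+1)*(((k+1:ℕ):ℝ)*θ) = ((i+1:ℕ):ℝ)*π - ((i:ℝ)+1)*θ := by
          push_cast; rw [← hπθ]; ring
        rw [h2, h1, Real.sin_pi_sub, Real.sin_nat_mul_pi_sub]
        have h4 : ((-1:ℝ))^(i*2) = 1 := by
          rw [pow_mul']; norm_num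
        simp only [Nat.cast_one, Nat.cast_add, one_mul]
        linear_combination (Real.sin θ * Real.sin (((i:ℝ)+1)*θ)) * h4
      have heq : (fun _ : ℕ => 2/((k:ℝ)+2) * c 1) =ᶠ[atTop ⊓ 𝓟 {j : ℕ | j % 2 = i % 2}]
          (fun j : ℕ => 2/((k:ℝ)+2) * (Real.cos (((k+1:ℕ):ℝ)*θ)/Real.cos θ)^j * c (k+1)) := by
        rw [EventuallyEq, eventually_inf_principal]
        filter_upwards with j hj
        have hj' : j % 2 = i % 2 := hj
        rw [hq, neg_one_pow_congr' j i hj']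
        rw [← hcv]; ring
      exact Tendsto.congr' heq tendsto_const_nhds
    · -- 2 ≤ m ≤ k
      have hm2 : 2 ≤ m := by omega
      have hmk' : m ≤ k := by omega
      have hm2' : (2:ℝ) ≤ (m:ℝ) := by exact_mod_cast hm2
      have hmk'' : (m:ℝ) ≤ (k:ℝ) := by exact_mod_cast hmk'
      have habs : |Real.cos ((m:ℝ)*θ)/Real.cos θ| < 1 := by
        rw [abs_div, abs_of_pos hcosθ, div_lt_one hcosθ, abs_lt]
        constructor
        · have h1 : (m:ℝ)*θ < π - θ := by nlinarith [hθpos]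
          have h2 := Real.cos_lt_cos_of_nonneg_of_le_pi
            (by positivity : (0:ℝ) ≤ (m:ℝ)*θ) (by linarith : π - θ ≤ π) h1
          rw [Real.cos_pi_sub] at h2
          linarith
        · have h1 : θ < (m:ℝ)*θ := by nlinarith [hθpos]
          have h2 : (m:ℝ)*θ ≤ π := by nlinarith [hθpos]
          exact Real.cos_lt_cos_of_nonneg_of_le_pi hθpos.le h2 h1
      have h0 : Tendsto (fun j : ℕ => (Real.cos ((m:ℝ)*θ)/Real.cos θ)^j) atTop (nhds 0) :=
        tendsto_pow_atTop_nhds_zero_of_abs_lt_one habs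
      have hLm : L m = 0 := by simp [hL, hm1, hmk]
      rw [hLm]
      have h00 : (2/((k:ℝ)+2) * (0:ℝ) * c m) = 0 := by ring
      rw [← h00]
      exact ((h0.const_mul (2/((k:ℝ)+2))).mul_const (c m)).mono_left inf_le_left
  have hLsum : ∑ m ∈ Finset.range (k+2), L m = 4/((k:ℝ)+2) * c 1 := by
    rw [hL, Finset.sum_add_distrib, Finset.sum_ite_eq' (Finset.range (k+2)) 1,
      Finset.sum_ite_eq' (Finset.range (k+2)) (k+1)]
    rw [if_pos (Finset.mem_range.mpr (by omega) : (1:ℕ) ∈ Finset.range (k+2)),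
      if_pos (Finset.mem_range.mpr (by omega) : k+1 ∈ Finset.range (k+2))]
    ring
  have hval : 4/((k:ℝ)+2) * c 1 = 4 / ((k:ℝ) + 2) * Real.sin θ ^ 2 *
      (Chebyshev.U ℝ ((k : ℤ) - i)).eval (Real.cos θ) := by
    have hU := Polynomial.Chebyshev.U_real_cos θ ((k:ℤ) - i)
    have harg : (((k:ℤ) - i : ℤ) : ℝ) + 1 = (k:ℝ) - i + 1 := by push_cast; ring
    rw [harg, show ((k:ℝ) - i + 1) * θ = π - ((i:ℝ)+1)*θ by rw [← hπθ]; ring,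
      Real.sin_pi_sub] at hU
    have hc1 : c 1 = Real.sin θ * Real.sin (((i:ℝ)+1)*θ) := by
      simp [hc]
    rw [hc1]
    linear_combination (-(4/((k:ℝ)+2) * Real.sin θ)) * hU
  rw [hLsum, hval] at hmain
  refine hmain.congr fun j => ?_
  rw [bratteliD_formula k j i hik, ← hθdef]
  rw [Finset.mul_sum, Finset.sum_div]
  apply Finset.sum_congr rfl
  intro m _
  simp only [hc]
  rw [div_pow, mul_pow, mul_pow]
  field_simp
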